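/- Let C ⊆ D be compact subsets of ℝ² with C convex and with ∂D a rectifiable Jordan curve. Then the length of ∂C is at most the length of ∂D. -/
import Mathlib


open MeasureTheory InnerProductSpace

section Aux

variable {F : Type*} [NormedAddCommGroup F] [InnerProductSpace ℝ F]

/-- Uniqueness of points satisfying the variational inequality for projection onto a set. -/
lemma proj_var_unique {K : Set F} {u v₁ v₂ : F} (hv₁ : v₁ ∈ K) (hv₂ : v₂ ∈ K)
    (h₁ : ∀ w ∈ K, ⟪u - v₁, w - v₁⟫_ℝ ≤ 0) (h₂ : ∀ w ∈ K, ⟪u - v₂, w - v₂⟫_ℝ ≤ 0) :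
    v₁ = v₂ := by
  have a := h₁ v₂ hv₂
  have b := h₂ v₁ hv₁
  have a' : 0 ≤ ⟪u - v₁, v₁ - v₂⟫_ℝ := by
    rw [show v₂ - v₁ = -(v₁ - v₂) by abel, inner_neg_right] at a
    linarith
  have e : ⟪v₁ - v₂, v₁ - v₂⟫_ℝ = ⟪u - v₂, v₁ - v₂⟫_ℝ - ⟪u - v₁, v₁ - v₂⟫_ℝ := by
    simp only [inner_sub_left]; ring
  have key : ⟪v₁ - v₂, v₁ - v₂⟫_ℝ ≤ 0 := by linarith
  exact sub_eq_zero.mp (real_inner_self_nonpos.mp key)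

/-- The variational inequality implies the 1-Lipschitz estimate. -/
lemma proj_var_lipschitz {K : Set F} {u v pu pv : F} (hpu : pu ∈ K) (hpv : pv ∈ K)
    (h₁ : ∀ w ∈ K, ⟪u - pu, w - pu⟫_ℝ ≤ 0) (h₂ : ∀ w ∈ K, ⟪v - pv, w - pv⟫_ℝ ≤ 0) :
    ‖pu - pv‖ ≤ ‖u - v‖ := by
  have a := h₁ pv hpv
  have b := h₂ pu hpu
  have a' : 0 ≤ ⟪u - pu, pu - pv⟫_ℝ := by
    rw [show pv - pu = -(pu - pv) by abel, inner_neg_right] at a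
    linarith
  have e : ⟪u - v, pu - pv⟫_ℝ
      = ⟪u - pu, pu - pv⟫_ℝ - ⟪v - pv, pu - pv⟫_ℝ + ⟪pu - pv, pu - pv⟫_ℝ := by
    simp only [inner_sub_left]; ring
  have key : ‖pu - pv‖ ^ 2 ≤ ⟪u - v, pu - pv⟫_ℝ := by
    rw [← real_inner_self_eq_norm_sq]
    linarith
  have cs : ⟪u - v, pu - pv⟫_ℝ ≤ ‖u - v‖ * ‖pu - pv‖ := real_inner_le_norm _ _
  rcases eq_or_lt_of_le (norm_nonneg (pu - pv)) with h0 | h0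
  · rw [← h0]; exact norm_nonneg _
  · nlinarith [key, cs]

end Aux

/-- Let `C ⊆ D` be compact subsets of `ℝ²` with `C` convex and `∂D` a
rectifiable Jordan curve.  Then the length (one-dimensional Hausdorff measure) of `∂C` is
at most the length of `∂D`. -/
theorem boundary_length_monotone (C D : Set (EuclideanSpace ℝ (Fin 2)))
    (hCD : C ⊆ D) (hC : IsCompact C) (hD : IsCompact D) (hconv : Convex ℝ C)
    (γ : ℝ → EuclideanSpace ℝ (Fin 2))
    (hγcont : ContinuousOn γ (Set.Icc 0 1))
    (hγinj : Set.InjOn γ (Set.Ico 0 1))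
    (hγclosed : γ 0 = γ 1)
    (hγim : γ '' Set.Icc 0 1 = frontier D)
    (hγrect : eVariationOn γ (Set.Icc 0 1) ≠ ⊤) :
    μH[1] (frontier C) ≤ μH[1] (frontier D) := by
  classical
  rcases C.eq_empty_or_nonempty with hE | hne
  · simp [hE]
  have hCc : IsClosed C := hC.isClosed
  have hDc : IsClosed D := hD.isClosed
  -- the metric projection onto C
  choose p hpC hpmin using
    exists_norm_eq_iInf_of_complete_convex hne hCc.isComplete hconv
  have hchar : ∀ u, ∀ w ∈ C, ⟪u - p u, w - p u⟫_ℝ ≤ 0 := fun u =>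
    (norm_eq_iInf_iff_real_inner_le_zero hconv (hpC u)).mp (hpmin u)
  have hfix : ∀ x ∈ C, p x = x := by
    intro x hx
    exact proj_var_unique (hpC x) hx (hchar x) (fun w hw => by simp)
  have hlip : LipschitzWith 1 p := by
    rw [lipschitzWith_iff_dist_le_mul]
    intro u v
    simp only [NNReal.coe_one, one_mul, dist_eq_norm]
    exact proj_var_lipschitz (hpC u) (hpC v) (hchar u) (hchar v)
  -- the ray lemma: every point outside C projects to the same point as some frontier point of D
  have hray : ∀ z, z ∉ C → ∃ w ∈ frontier D, p w = p z := by
    intro z hz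
    set v : EuclideanSpace ℝ (Fin 2) := z - p z with hv
    have hvne : v ≠ 0 := sub_ne_zero.mpr (fun h => hz (h ▸ hpC z))
    set f : ℝ → EuclideanSpace ℝ (Fin 2) := fun t => p z + t • v with hf
    have hfc : Continuous f := by fun_prop
    set S : Set ℝ := {t | 0 ≤ t ∧ f t ∈ D} with hS
    have hS0 : (0 : ℝ) ∈ S := ⟨le_refl 0, by simpa [hf] using hCD (hpC z)⟩
    have hSne : S.Nonempty := ⟨0, hS0⟩
    have hSclosed : IsClosed S := by
      have : S = Set.Ici (0:ℝ) ∩ f ⁻¹' D := by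
        ext t; simp [hS, Set.mem_Ici, and_comm]
      rw [this]
      exact isClosed_Ici.inter (hDc.preimage hfc)
    obtain ⟨R, hR⟩ := hD.isBounded.subset_ball 0
    have hSbdd : BddAbove S := by
      refine ⟨(R + ‖p z‖) / ‖v‖, ?_⟩
      intro t ht
      by_contra hlt
      push_neg at hlt
      have hnv : 0 < ‖v‖ := norm_pos_iff.mpr hvne
      have h1 : R + ‖p z‖ < t * ‖v‖ := by
        rw [div_lt_iff₀ hnv] at hlt; linarith
      have h2 : ‖f t‖ < R := by
        have := hR ht.2
        simpa [Metric.mem_ball, dist_eq_norm] using this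
      have h3 : t * ‖v‖ - ‖p z‖ ≤ ‖f t‖ := by
        have h4 : ‖t • v‖ ≤ ‖f t‖ + ‖p z‖ := by
          have he : t • v = f t - p z := by simp [hf]
          rw [he]
          exact norm_sub_le _ _
        rw [norm_smul, Real.norm_eq_abs, abs_of_nonneg ht.1] at h4
        linarith
      linarith
    set t₀ := sSup S with ht₀
    have ht₀S : t₀ ∈ S := hSclosed.csSup_mem hSne hSbdd
    refine ⟨f t₀, ?_, ?_⟩
    · -- f t₀ ∈ frontier D
      rw [frontier_eq_closure_inter_closure]
      constructor
      · exact subset_closure ht₀S.2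
      · -- limit of points outside D
        have : ∀ n : ℕ, f (t₀ + 1/(n+1)) ∉ D := by
          intro n
          intro hmem
          have hpos : (0:ℝ) < 1/(n+1) := by positivity
          have : t₀ + 1/(n+1) ∈ S := ⟨by linarith [ht₀S.1], hmem⟩
          have := le_csSup hSbdd this
          linarith
        have htend : Filter.Tendsto (fun n : ℕ => f (t₀ + 1/((n:ℝ)+1))) Filter.atTop
            (nhds (f t₀)) := by
          refine (hfc.tendsto t₀).comp ?_
          have h5 : Filter.Tendsto (fun n : ℕ => t₀ + 1/((n:ℝ)+1)) Filter.atTop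
              (nhds (t₀ + 0)) :=
            Filter.Tendsto.const_add _ tendsto_one_div_add_atTop_nhds_zero_nat
          simpa using h5
        exact mem_closure_of_tendsto htend
          (Filter.Eventually.of_forall fun n => this n)
    · -- p (f t₀) = p z
      refine proj_var_unique (hpC (f t₀)) (hpC z) (hchar (f t₀)) ?_
      intro w hw
      have : f t₀ - p z = t₀ • v := by simp [hf]
      rw [this, real_inner_smul_left]
      exact mul_nonpos_of_nonneg_of_nonpos ht₀S.1 (hchar z w hw)
  -- the key inclusion
  have hsub : frontier C ⊆ p '' frontier D := by
    have hcl : IsClosed (p '' frontier D) :=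
      ((hD.of_isClosed_subset isClosed_frontier
        (frontier_subset_closure.trans hDc.closure_eq.subset)).image
        hlip.continuous).isClosed
    intro x hx
    have hxC : x ∈ C := hCc.closure_eq ▸ hx.1
    have hxcl : x ∈ closure Cᶜ := by
      rw [frontier_eq_closure_inter_closure] at hx
      exact hx.2
    rw [← hcl.closure_eq]
    rw [Metric.mem_closure_iff]
    intro ε hε
    rw [Metric.mem_closure_iff] at hxcl
    obtain ⟨z, hz, hdz⟩ := hxcl ε hε
    obtain ⟨w, hw, hpw⟩ := hray z hz
    refine ⟨p w, ⟨w, hw, rfl⟩, ?_⟩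
    rw [hpw]
    calc dist x (p z) = dist (p x) (p z) := by rw [hfix x hxC]
      _ ≤ 1 * dist x z := hlip.dist_le_mul x z
      _ < ε := by simpa using hdz
  -- conclude
  calc μH[1] (frontier C) ≤ μH[1] (p '' frontier D) := measure_mono hsub
    _ ≤ (1:NNReal) ^ (1:ℝ) * μH[1] (frontier D) :=
        hlip.hausdorffMeasure_image_le (by norm_num) _
    _ = μH[1] (frontier D) := by simp
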